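/- Let E be a complete real inner product space, let q : E → ℝ be convex and continuous, and suppose prox : E → E is such that for every x ∈ E, prox(x) is the unique minimizer over y ∈ E of (1/2)‖y − x‖² + q(y). Then the Moreau–Yosida regularization θ(x) = (1/2)‖prox(x) − x‖² + q(prox(x)) is differentiable on E, with gradient ∇θ(x) = x − prox(x) at every x ∈ E. -/

import Mathlib

open RealInnerProductSpace

/-- Let `E` be a complete real inner product space, `q : E → ℝ` convex and
continuous, and `prox : E → E` such that `prox x` is the unique minimizer of
`y ↦ (1/2)‖y − x‖² + q(y)`. Then the Moreau–Yosida regularization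
`θ(x) = (1/2)‖prox x − x‖² + q(prox x)` is differentiable with `∇θ(x) = x − prox x`. -/
theorem stmt_4 {E : Type*} [NormedAddCommGroup E] [InnerProductSpace ℝ E] [CompleteSpace E]
    (q : E → ℝ) (hq : ConvexOn ℝ Set.univ q) (hqc : Continuous q)
    (prox : E → E)
    (hmin : ∀ x : E, ∀ y : E,
      (1 / 2) * ‖prox x - x‖ ^ 2 + q (prox x) ≤ (1 / 2) * ‖y - x‖ ^ 2 + q y)
    (huniq : ∀ x : E, ∀ y : E,
      (∀ y' : E, (1 / 2) * ‖y - x‖ ^ 2 + q y ≤ (1 / 2) * ‖y' - x‖ ^ 2 + q y') →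
      y = prox x) :
    ∀ x : E,
      HasGradientAt (fun x' : E => (1 / 2) * ‖prox x' - x'‖ ^ 2 + q (prox x'))
        (x - prox x) x := by
  -- optimality inequality for prox
  have key : ∀ x y : E, ⟪x - prox x, y - prox x⟫ ≤ q y - q (prox x) := by
    intro x y
    set p := prox x with hp
    refine le_of_forall_pos_le_add ?_
    intro ε hε
    set S := ‖y - p‖ ^ 2 with hS
    have hS0 : (0:ℝ) ≤ S := by positivity
    set t : ℝ := min 1 (ε / (S + 1)) with ht
    have ht0 : 0 < t := lt_min one_pos (by positivity)
    have ht1 : t ≤ 1 := min_le_left _ _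
    have htε : t ≤ ε / (S + 1) := min_le_right _ _
    have hcvx := hq.2 (Set.mem_univ p) (Set.mem_univ y)
      (by linarith : (0:ℝ) ≤ 1 - t) (le_of_lt ht0) (by ring)
    have hmin' := hmin x ((1 - t) • p + t • y)
    have hexp : ‖(1 - t) • p + t • y - x‖ ^ 2
        = ‖p - x‖ ^ 2 + 2 * (t * ⟪p - x, y - p⟫) + t ^ 2 * S := by
      have heq : (1 - t) • p + t • y - x = (p - x) + t • (y - p) := by module
      rw [heq, norm_add_sq_real, real_inner_smul_right, norm_smul, hS]
      rw [Real.norm_eq_abs, abs_of_pos ht0]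
      ring
    rw [hexp, ← hp] at hmin'
    simp only [smul_eq_mul] at hcvx
    have hip : ⟪x - p, y - p⟫ = -⟪p - x, y - p⟫ := by
      rw [show x - p = -(p - x) by abel, inner_neg_left]
    rw [hip]
    -- from hmin' and hcvx: q p ≤ t⟪p-x,y-p⟫ + t²S/2 + (1-t) q p + t q y
    have h1 : t * q p ≤ t * ⟪p - x, y - p⟫ + t ^ 2 / 2 * S + t * q y := by
      nlinarith [hmin', hcvx]
    have h2 : q p ≤ ⟪p - x, y - p⟫ + t / 2 * S + q y := by
      have := (mul_le_mul_iff_right₀ ht0).mp (by linarith [h1] :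
        t * q p ≤ t * (⟪p - x, y - p⟫ + t / 2 * S + q y))
      linarith [this]
    have h3 : t / 2 * S ≤ ε := by
      have h4 : t * (S + 1) ≤ ε := by
        calc t * (S + 1) ≤ ε / (S + 1) * (S + 1) := by
              apply mul_le_mul_of_nonneg_right htε (by positivity)
          _ = ε := by field_simp
      nlinarith
    linarith
  -- firm nonexpansiveness consequence
  have firm : ∀ x x' : E, ⟪prox x' - prox x, x' - x⟫ ≤ ‖x' - x‖ ^ 2 := by
    intro x x'
    have h1 := key x (prox x')
    have h2 := key x' (prox x)
    set p := prox x
    set p' := prox x'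
    have hsum : ⟪x - p, p' - p⟫ + ⟪x' - p', p - p'⟫ ≤ 0 := by linarith
    have hfne : ‖p' - p‖ ^ 2 ≤ ⟪p' - p, x' - x⟫ := by
      have e1 : ⟪x' - p', p - p'⟫ = -⟪x' - p', p' - p⟫ := by
        rw [show p - p' = -(p' - p) by abel, inner_neg_right]
      have e2 : ⟪x' - p', p' - p⟫ - ⟪x - p, p' - p⟫
          = ⟪x' - x, p' - p⟫ - ⟪p' - p, p' - p⟫ := by
        rw [← inner_sub_left, ← inner_sub_left]
        congr 1
        abel
      have e3 : ⟪p' - p, p' - p⟫ = ‖p' - p‖ ^ 2 := real_inner_self_eq_norm_sq _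
      have e4 : ⟪x' - x, p' - p⟫ = ⟪p' - p, x' - x⟫ := real_inner_comm _ _
      rw [e1] at hsum
      linarith [hsum, e2, e3, e4]
    have hcs := real_inner_le_norm (p' - p) (x' - x)
    nlinarith [hfne, hcs, sq_nonneg (‖p' - p‖ - ‖x' - x‖), norm_nonneg (p' - p), norm_nonneg (x' - x)]
  -- two-sided bound on the envelope
  intro x
  set θ : E → ℝ := fun x' => (1 / 2) * ‖prox x' - x'‖ ^ 2 + q (prox x') with hθ
  have hbound : ∀ x' : E, |θ x' - θ x - ⟪x - prox x, x' - x⟫| ≤ (1/2) * ‖x' - x‖ ^ 2 := by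
    intro x'
    set p := prox x with hpd
    set p' := prox x' with hpd'
    have hup : θ x' ≤ θ x + ⟪x - p, x' - x⟫ + (1/2) * ‖x' - x‖ ^ 2 := by
      have h := hmin x' p
      have hexp : ‖p - x'‖ ^ 2 = ‖p - x‖ ^ 2 + 2 * ⟪p - x, x - x'⟫ + ‖x - x'‖ ^ 2 := by
        have heq : p - x' = (p - x) + (x - x') := by abel
        rw [heq, norm_add_sq_real]
      have hip : ⟪p - x, x - x'⟫ = ⟪x - p, x' - x⟫ := by
        rw [show x - p = -(p - x) by abel, show x' - x = -(x - x') by abel,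
          inner_neg_neg]
      have hn : ‖x - x'‖ = ‖x' - x‖ := norm_sub_rev _ _
      simp only [hθ] at h ⊢
      rw [hexp, hip, hn] at h
      linarith
    have hlow : θ x ≤ θ x' + ⟪x' - p', x - x'⟫ + (1/2) * ‖x' - x‖ ^ 2 := by
      have h := hmin x p'
      have hexp : ‖p' - x‖ ^ 2 = ‖p' - x'‖ ^ 2 + 2 * ⟪p' - x', x' - x⟫ + ‖x' - x‖ ^ 2 := by
        have heq : p' - x = (p' - x') + (x' - x) := by abel
        rw [heq, norm_add_sq_real]
      have hip : ⟪p' - x', x' - x⟫ = ⟪x' - p', x - x'⟫ := by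
        rw [show x' - p' = -(p' - x') by abel, show x - x' = -(x' - x) by abel,
          inner_neg_neg]
      simp only [hθ] at h ⊢
      rw [hexp, hip] at h
      linarith
    -- lower bound on θ x' - θ x - ⟪x - p, x' - x⟫
    have hdiff : ⟪x' - p', x - x'⟫ + ⟪x - p, x' - x⟫
        = ⟪p' - p, x' - x⟫ - ‖x' - x‖ ^ 2 := by
      simp only [← real_inner_self_eq_norm_sq, show x - x' = -(x' - x) by abel,
        show x - p = (p' - p) - (x' - x) + (x' - p') by abel,
        inner_neg_right, inner_add_left, inner_sub_left]
      ring
    have hfirm := firm x x'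
    rw [abs_le]
    constructor
    · -- lower
      have := hlow
      nlinarith [hdiff, hfirm, this]
    · linarith [hup]
  rw [hasGradientAt_iff_isLittleO, Asymptotics.isLittleO_iff]
  intro c hc
  rw [Metric.eventually_nhds_iff]
  refine ⟨2 * c, by linarith, fun y hy => ?_⟩
  rw [dist_eq_norm] at hy
  have hb := hbound y
  have hn : ‖y - x‖ ≥ 0 := norm_nonneg _
  calc ‖θ y - θ x - ⟪x - prox x, y - x⟫‖ = |θ y - θ x - ⟪x - prox x, y - x⟫| := rfl
    _ ≤ (1/2) * ‖y - x‖ ^ 2 := hb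
    _ ≤ c * ‖y - x‖ := by nlinarith
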